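/- For all real t > 0 and Δ > 0, defining f(t) := -log t + t - 1, we have f(t + Δ) ≤ (1 - log(min(1, Δ)))·(t - 1)² + Δ. -/
import Mathlib

lemma key_aux (x : ℝ) (hx : 0 < x) : x * (1 - Real.log x) ≤ 1 := by
  have h := Real.add_one_le_exp (-Real.log x)
  rw [Real.exp_neg, Real.exp_log hx] at h
  have hx' : x ≠ 0 := ne_of_gt hx
  have : x * (-Real.log x + 1) ≤ x * x⁻¹ := by
    exact mul_le_mul_of_nonneg_left h (le_of_lt hx)
  rw [mul_inv_cancel₀ hx'] at this
  nlinarith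

theorem stmt_1 (t Δ : ℝ) (ht : 0 < t) (hΔ : 0 < Δ)
    (f : ℝ → ℝ) (hf : ∀ s, f s = -Real.log s + s - 1) :
    f (t + Δ) ≤ (1 - Real.log (min 1 Δ)) * (t - 1)^2 + Δ := by
  rw [hf]
  have hmin : Real.log (min 1 Δ) ≤ 0 := by
    apply Real.log_nonpos
    · positivity
    · exact min_le_left 1 Δ
  have hC : (1 : ℝ) ≤ 1 - Real.log (min 1 Δ) := by linarith
  -- suffices: -log(t+Δ) + t - 1 ≤ C (t-1)^2
  suffices h : -Real.log (t + Δ) + t - 1 ≤ (1 - Real.log (min 1 Δ)) * (t - 1)^2 by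
    linarith
  rcases le_or_gt 1 t with h1 | h1
  · -- t ≥ 1
    have hlt : Real.log t ≤ Real.log (t + Δ) := by
      apply Real.log_le_log (by linarith) (by linarith)
    have hinv : Real.log t ≥ 1 - 1/t := by
      have := Real.log_le_sub_one_of_pos (x := 1/t) (by positivity)
      rw [Real.log_div one_ne_zero (ne_of_gt ht), Real.log_one] at this
      have ht1 : (1:ℝ)/t ≤ 1 := by
        rw [div_le_one ht]; linarith
      linarith
    have hq : -Real.log t + t - 1 ≤ (t-1)^2 := by
      have heq : 1/t - 1 + t - 1 = (t-1)^2 / t := by field_simp; ring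
      have h2 : (t-1)^2 / t ≤ (t-1)^2 := div_le_self (sq_nonneg _) h1
      linarith
    have hsq : (t-1)^2 ≤ (1 - Real.log (min 1 Δ)) * (t - 1)^2 := by
      nlinarith [sq_nonneg (t-1)]
    linarith
  · rcases le_or_gt 1 (t + Δ) with h2 | h2
    · -- t < 1 ≤ t + Δ
      have hl : 0 ≤ Real.log (t + Δ) := Real.log_nonneg h2
      have : 0 ≤ (1 - Real.log (min 1 Δ)) * (t - 1)^2 := by positivity
      linarith
    · -- t + Δ < 1, so Δ < 1
      have hΔ1 : Δ < 1 := by linarith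
      have hminΔ : min 1 Δ = Δ := min_eq_right (le_of_lt hΔ1)
      rw [hminΔ]
      obtain ⟨v, hv⟩ : ∃ v : ℝ, v = 1 - t - Δ := ⟨_, rfl⟩
      have hne : (1:ℝ) - Δ ≠ 0 := by linarith
      have hv0 : 0 < v := by rw [hv]; linarith
      have hx : t + Δ = 1 - v := by rw [hv]; ring
      have hx0 : 0 < t + Δ := by linarith
      -- chord bound via concavity: log(t+Δ) ≥ (v/(1-Δ)) * log Δ
      have hcon := strictConcaveOn_log_Ioi.concaveOn
      have hl0 : 0 ≤ v / (1 - Δ) := div_nonneg hv0.le (by linarith)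
      have hl1 : 0 ≤ 1 - v / (1 - Δ) := by
        have : v / (1 - Δ) ≤ 1 := by
          rw [div_le_one (by linarith)]
          linarith
        linarith
      have hsum : v / (1 - Δ) + (1 - v / (1 - Δ)) = 1 := by ring
      have hchord := hcon.2 (x := Δ) (y := 1) (Set.mem_Ioi.mpr hΔ)
        (Set.mem_Ioi.mpr one_pos) hl0 hl1 hsum
      rw [Real.log_one] at hchord
      have hcomb : v / (1 - Δ) * Δ + (1 - v / (1 - Δ)) * 1 = t + Δ := by
        rw [hv]
        field_simp
        ring
      simp only [smul_eq_mul] at hchord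
      rw [hcomb, mul_zero, add_zero] at hchord
      -- so: -log(t+Δ) ≤ (v/(1-Δ)) * (-log Δ)
      have hchord' : -Real.log (t + Δ) ≤ v / (1 - Δ) * (-Real.log Δ) := by
        nlinarith [hchord]
      -- key lemma applied at x = t+Δ : -log x - (1-x) ≤ (1-x)(-log x)
      have hk1 : (t + Δ) * (1 - Real.log (t + Δ)) ≤ 1 := key_aux _ hx0
      -- i.e. -log(t+Δ) - v ≤ v * (-log(t+Δ))
      have hstep1 : -Real.log (t + Δ) - v ≤ v * (-Real.log (t + Δ)) := by
        nlinarith [hk1]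
      -- key lemma at Δ: -logΔ ≤ (1-Δ)(1-logΔ)
      have hk2 : Δ * (1 - Real.log Δ) ≤ 1 := key_aux _ hΔ
      have hstep2 : -Real.log Δ ≤ (1 - Δ) * (1 - Real.log Δ) := by nlinarith
      -- combine
      have hlogΔ : 0 ≤ -Real.log Δ := by
        have := Real.log_nonpos (le_of_lt hΔ) (le_of_lt hΔ1)
        linarith
      have hstep3 : v * (-Real.log (t + Δ)) ≤ v * (v / (1 - Δ) * (-Real.log Δ)) :=
        mul_le_mul_of_nonneg_left hchord' (le_of_lt hv0)
      have hstep4 : v * (v / (1 - Δ) * (-Real.log Δ)) ≤ v^2 * (1 - Real.log Δ) := by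
        have h1Δ : (0:ℝ) < 1 - Δ := by linarith
        rw [show v * (v / (1 - Δ) * (-Real.log Δ)) = v^2 * (-Real.log Δ) / (1 - Δ) by ring]
        rw [div_le_iff₀ h1Δ]
        have hv2 : (0:ℝ) ≤ v^2 := sq_nonneg v
        nlinarith [mul_le_mul_of_nonneg_left hstep2 hv2]
      have hstep5 : v^2 * (1 - Real.log Δ) ≤ (1 - Real.log Δ) * (t - 1)^2 := by
        have : (t - 1)^2 = (v + Δ)^2 := by rw [hv]; ring
        rw [this]
        have hC' : (0:ℝ) ≤ 1 - Real.log Δ := by linarith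
        have hsq : v^2 ≤ (v + Δ)^2 := by nlinarith
        nlinarith [mul_le_mul_of_nonneg_left hsq hC']
      linarith
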